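/- Let A be an invertible square rational matrix. Then A is totally equimodular if and only if the transpose of its inverse, (A^{-1})^T, is totally equimodular. -/

import Mathlib

/-- All the nonzero maximal (m×m) subdeterminants of `A` have the same absolute value. -/
def Equimodular {m n : ℕ} (A : Matrix (Fin m) (Fin n) ℚ) : Prop :=
  ∃ d : ℚ, ∀ g : Fin m ↪ Fin n,
    (A.submatrix id g).det ≠ 0 → |(A.submatrix id g).det| = d

/-- Every set of linearly independent rows of `A` forms an equimodular matrix. -/
def TotallyEquimodular {m n : ℕ} (A : Matrix (Fin m) (Fin n) ℚ) : Prop :=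
  ∀ (k : ℕ) (e : Fin k ↪ Fin m),
    LinearIndependent ℚ (fun i => A (e i)) → Equimodular (A.submatrix e id)

open Classical in
/-- Extend an embedding `Fin k ↪ Fin n` to an equivalence `Fin k ⊕ Fin (n-k) ≃ Fin n`. -/
noncomputable def cEquiv {n k : ℕ} (f : Fin k ↪ Fin n) : (Fin k ⊕ Fin (n - k)) ≃ Fin n :=
  (Equiv.sumCongr (Equiv.ofInjective f f.injective)
    (Fintype.equivFinOfCardEq (by
      rw [Fintype.card_subtype_compl, Fintype.card_fin]
      congr 1
      exact (Fintype.card_congr (Equiv.ofInjective f f.injective).symm).trans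
        (Fintype.card_fin k))).symm).trans
    (Equiv.sumCompl (· ∈ Set.range f))

@[simp] lemma cEquiv_inl {n k : ℕ} (f : Fin k ↪ Fin n) (i : Fin k) :
    cEquiv f (Sum.inl i) = f i := by
  simp [cEquiv]

/-- The complementary embedding. -/
noncomputable def cEmb {n k : ℕ} (f : Fin k ↪ Fin n) : Fin (n - k) ↪ Fin n :=
  ⟨fun j => cEquiv f (Sum.inr j), fun a b h => by
    simpa using (cEquiv f).injective h⟩

lemma cEmb_apply {n k : ℕ} (f : Fin k ↪ Fin n) (j : Fin (n - k)) :
    cEmb f j = cEquiv f (Sum.inr j) := rfl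

lemma det_mul_det_inv_block {k m : ℕ}
    (B : Matrix (Fin k ⊕ Fin m) (Fin k ⊕ Fin m) ℚ) (hB : IsUnit B.det) :
    B.det * (B⁻¹.toBlocks₁₁).det = (B.toBlocks₂₂).det := by
  have h1 : B * B⁻¹ = 1 := Matrix.mul_nonsing_inv B hB
  have h2 : Matrix.fromBlocks B.toBlocks₁₁ B.toBlocks₁₂ B.toBlocks₂₁ B.toBlocks₂₂ *
      Matrix.fromBlocks B⁻¹.toBlocks₁₁ B⁻¹.toBlocks₁₂ B⁻¹.toBlocks₂₁ B⁻¹.toBlocks₂₂ = 1 := by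
    rw [Matrix.fromBlocks_toBlocks, Matrix.fromBlocks_toBlocks]; exact h1
  rw [Matrix.fromBlocks_multiply] at h2
  have e11 : B.toBlocks₁₁ * B⁻¹.toBlocks₁₁ + B.toBlocks₁₂ * B⁻¹.toBlocks₂₁ = 1 := by
    have := congrArg Matrix.toBlocks₁₁ h2
    simp [Matrix.toBlocks_fromBlocks₁₁, Matrix.toBlocks₁₁, Matrix.one_apply] at this
    exact this
  have e21 : B.toBlocks₂₁ * B⁻¹.toBlocks₁₁ + B.toBlocks₂₂ * B⁻¹.toBlocks₂₁ = 0 := by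
    have := congrArg Matrix.toBlocks₂₁ h2
    simp [Matrix.toBlocks_fromBlocks₂₁, Matrix.toBlocks₂₁, Matrix.one_apply] at this
    exact this
  have key : B * Matrix.fromBlocks B⁻¹.toBlocks₁₁ 0 B⁻¹.toBlocks₂₁ 1 =
      Matrix.fromBlocks 1 B.toBlocks₁₂ 0 B.toBlocks₂₂ := by
    nth_rewrite 1 [← Matrix.fromBlocks_toBlocks B]
    rw [Matrix.fromBlocks_multiply, e11, e21]
    simp
  have hdet := congrArg Matrix.det key
  rw [Matrix.det_mul, Matrix.det_fromBlocks_zero₁₂, Matrix.det_fromBlocks_zero₂₁] at hdet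
  simpa using hdet

lemma jacobi_abs {n k : ℕ} (A : Matrix (Fin n) (Fin n) ℚ) (hA : IsUnit A.det)
    (e g : Fin k ↪ Fin n) :
    |A.det| * |((A⁻¹).submatrix g e).det| = |(A.submatrix (cEmb e) (cEmb g)).det| := by
  set E := cEquiv e
  set G := cEquiv g
  set B := A.submatrix E G with hBdef
  have hBabs : |B.det| = |A.det| := Matrix.abs_det_submatrix_equiv_equiv E G A
  have hAd : A.det ≠ 0 := hA.ne_zero
  have hBunit : IsUnit B.det := by
    rw [isUnit_iff_ne_zero]
    intro h
    rw [h, abs_zero] at hBabs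
    exact hAd (abs_eq_zero.mp hBabs.symm)
  have hBinv : B⁻¹ = (A⁻¹).submatrix G E := Matrix.inv_submatrix_equiv A E G
  have h11 : B⁻¹.toBlocks₁₁ = (A⁻¹).submatrix g e := by
    ext i j
    simp [hBinv, Matrix.toBlocks₁₁, E, G]
  have h22 : B.toBlocks₂₂ = A.submatrix (cEmb e) (cEmb g) := by
    ext i j
    simp [hBdef, Matrix.toBlocks₂₂, cEmb_apply, E, G]
  have hmain := det_mul_det_inv_block B hBunit
  rw [h11, h22] at hmain
  calc |A.det| * |((A⁻¹).submatrix g e).det|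
      = |B.det| * |((A⁻¹).submatrix g e).det| := by rw [hBabs]
    _ = |B.det * ((A⁻¹).submatrix g e).det| := (abs_mul _ _).symm
    _ = |(A.submatrix (cEmb e) (cEmb g)).det| := by rw [hmain]

lemma forward {n : ℕ} (A : Matrix (Fin n) (Fin n) ℚ) (hA : IsUnit A.det)
    (hTE : TotallyEquimodular A) : TotallyEquimodular (A⁻¹).transpose := by
  intro k e _hli
  have hAd : A.det ≠ 0 := hA.ne_zero
  have hAu : IsUnit A := (Matrix.isUnit_iff_isUnit_det A).mpr hA
  have hrows : LinearIndependent ℚ (fun i => A i) :=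
    Matrix.linearIndependent_rows_iff_isUnit.mpr hAu
  have hli : LinearIndependent ℚ (fun i => A (cEmb e i)) :=
    hrows.comp (cEmb e) (cEmb e).injective
  obtain ⟨d, hd⟩ := hTE (n - k) (cEmb e) hli
  refine ⟨d / |A.det|, fun g hg => ?_⟩
  have h1 : (((A⁻¹).transpose.submatrix e id).submatrix id g) = ((A⁻¹).submatrix g e).transpose := by
    ext i j; rfl
  rw [h1, Matrix.det_transpose] at hg ⊢
  have hj := jacobi_abs A hA e g
  have h2 : ((A.submatrix (cEmb e) id).submatrix id (cEmb g)) = A.submatrix (cEmb e) (cEmb g) := by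
    ext i j; rfl
  have hne : (A.submatrix (cEmb e) (cEmb g)).det ≠ 0 := by
    intro h0
    rw [h0, abs_zero] at hj
    rcases mul_eq_zero.mp hj with h | h
    · exact hAd (abs_eq_zero.mp h)
    · exact hg (abs_eq_zero.mp h)
  have hda := hd (cEmb g) (by rw [h2]; exact hne)
  rw [h2] at hda
  rw [← hda, ← hj]
  field_simp

theorem stmt5 {n : ℕ} (A : Matrix (Fin n) (Fin n) ℚ) (hA : IsUnit A.det) :
    TotallyEquimodular A ↔ TotallyEquimodular (A⁻¹).transpose := by
  constructor
  · exact forward A hA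
  · intro h
    have hAd : A.det ≠ 0 := hA.ne_zero
    have hB : IsUnit ((A⁻¹).transpose).det := by
      rw [Matrix.det_transpose, Matrix.det_nonsing_inv]
      exact isUnit_iff_ne_zero.mpr (by simp [Ring.inverse_eq_inv', hAd])
    have hback := forward (A⁻¹).transpose hB h
    have hEq : (((A⁻¹).transpose)⁻¹).transpose = A := by
      rw [← Matrix.transpose_nonsing_inv, Matrix.transpose_transpose,
        Matrix.nonsing_inv_nonsing_inv A hA]
    rwa [hEq] at hback
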